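/- Let 1 ≤ p ≤ 2 and p < q < ∞, L ∈ ℕ, and suppose a random set K ⊆ [m] and a vector x ∈ ℝ^m with ‖x‖_p ≤ 1 satisfy: for every 1 ≤ l ≤ L and every j with 2^{−l/p} < |x_j|, ℙ(j ∉ K) ≤ 2^{−(L−l+1)R} where R = ⌈q/p⌉. Let z be the vector with z_j = x_j for j ∈ K and z_j = 0 otherwise. Then E‖x − z‖_q^q ≤ 3 · 2^{−L(q−p)/p}. -/
import Mathlib


open Finset MeasureTheory

lemma key_pointwise (p q : ℝ) (hp1 : 1 ≤ p) (hpq : p < q) (L R : ℕ)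
    (hRq : q ≤ R * p)
    (s : ℝ) (hs0 : 0 ≤ s) (hs1 : s ≤ 1) (ν : ENNReal) (hν1 : ν ≤ 1)
    (h : ∀ l : ℕ, 1 ≤ l → l ≤ L → (2:ℝ) ^ (-(l:ℝ)/p) < s →
      ν ≤ ENNReal.ofReal ((2:ℝ) ^ (-((L:ℝ) - l + 1) * (R:ℝ)))) :
    ENNReal.ofReal (s ^ q) * ν
      ≤ ENNReal.ofReal (s ^ p * (2:ℝ) ^ (-(L:ℝ) * (q - p) / p)) := by
  have hp0 : (0:ℝ) < p := lt_of_lt_of_le one_pos hp1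
  have hq0 : (0:ℝ) < q := lt_trans hp0 hpq
  have hqp : (0:ℝ) < q - p := sub_pos.mpr hpq
  rcases eq_or_lt_of_le hs0 with hs|hs
  · simp [← hs, Real.zero_rpow hq0.ne']
  have hsplit : ∀ a : ℝ, s ≤ (2:ℝ) ^ (a / p) →
      s ^ q ≤ s ^ p * (2:ℝ) ^ (a / p * (q - p)) := by
    intro a ha
    have h1 : s ^ q = s ^ p * s ^ (q - p) := by
      rw [← Real.rpow_add hs]; ring_nf
    have h2 : s ^ (q - p) ≤ ((2:ℝ) ^ (a / p)) ^ (q - p) :=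
      Real.rpow_le_rpow hs0 ha hqp.le
    have h3 : ((2:ℝ) ^ (a / p)) ^ (q - p) = (2:ℝ) ^ (a / p * (q - p)) := by
      rw [← Real.rpow_mul (by norm_num)]
    rw [h1]
    exact mul_le_mul_of_nonneg_left (h3 ▸ h2) (Real.rpow_nonneg hs0 p)
  by_cases hcase : s ≤ (2:ℝ) ^ (-(L:ℝ) / p)
  · have hsq := hsplit (-(L:ℝ)) hcase
    calc ENNReal.ofReal (s ^ q) * ν ≤ ENNReal.ofReal (s ^ q) * 1 :=
          mul_le_mul_right hν1 _
      _ = ENNReal.ofReal (s ^ q) := mul_one _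
      _ ≤ ENNReal.ofReal (s ^ p * (2:ℝ) ^ (-(L:ℝ) * (q - p) / p)) := by
          apply ENNReal.ofReal_le_ofReal
          calc s ^ q ≤ s ^ p * (2:ℝ) ^ (-(L:ℝ) / p * (q - p)) := hsq
            _ = s ^ p * (2:ℝ) ^ (-(L:ℝ) * (q - p) / p) := by ring_nf
  · push_neg at hcase
    classical
    have hPL : (2:ℝ) ^ (-(L:ℝ)/p) < s := hcase
    have hex : ∃ l : ℕ, (2:ℝ) ^ (-(l:ℝ)/p) < s := ⟨L, hPL⟩
    set l := Nat.find hex with hldef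
    have hPl : (2:ℝ) ^ (-(l:ℝ)/p) < s := Nat.find_spec hex
    have hlL : l ≤ L := Nat.find_le hPL
    have hl1 : 1 ≤ l := by
      rcases Nat.eq_zero_or_pos l with h0|h0
      · exfalso
        have h1 := hPl
        rw [h0] at h1
        norm_num at h1
        linarith
      · exact h0
    have hprev : s ≤ (2:ℝ) ^ (-((l:ℝ) - 1)/p) := by
      have hnf : ¬ ((2:ℝ) ^ (-((l-1:ℕ):ℝ)/p) < s) := Nat.find_min hex (by omega)
      push_neg at hnf
      have hcast : ((l-1:ℕ):ℝ) = (l:ℝ) - 1 := by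
        push_cast [Nat.cast_sub hl1]; ring
      rwa [hcast] at hnf
    have hν : ν ≤ ENNReal.ofReal ((2:ℝ) ^ (-((L:ℝ) - l + 1) * (R:ℝ))) :=
      h l hl1 hlL hPl
    have hsq : s ^ q ≤ s ^ p * (2:ℝ) ^ (-((l:ℝ) - 1)/p * (q - p)) := hsplit _ hprev
    calc ENNReal.ofReal (s ^ q) * ν
        ≤ ENNReal.ofReal (s ^ p * (2:ℝ) ^ (-((l:ℝ) - 1)/p * (q - p))) *
          ENNReal.ofReal ((2:ℝ) ^ (-((L:ℝ) - l + 1) * (R:ℝ))) :=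
          mul_le_mul' (ENNReal.ofReal_le_ofReal hsq) hν
      _ = ENNReal.ofReal (s ^ p * ((2:ℝ) ^ (-((l:ℝ) - 1)/p * (q - p)) *
            (2:ℝ) ^ (-((L:ℝ) - l + 1) * (R:ℝ)))) := by
          rw [← ENNReal.ofReal_mul (by positivity)]; ring_nf
      _ ≤ ENNReal.ofReal (s ^ p * (2:ℝ) ^ (-(L:ℝ) * (q - p) / p)) := by
          apply ENNReal.ofReal_le_ofReal
          apply mul_le_mul_of_nonneg_left _ (Real.rpow_nonneg hs0 p)
          rw [← Real.rpow_add (by norm_num : (0:ℝ) < 2)]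
          apply (Real.rpow_le_rpow_left_iff (x := (2:ℝ)) (by norm_num)).mpr
          have hlLr : (l:ℝ) ≤ L := Nat.cast_le.mpr hlL
          have hl1r : (1:ℝ) ≤ l := by exact_mod_cast hl1
          have ha' : (q - p)/p ≤ (R:ℝ) := by
            rw [div_le_iff₀ hp0]; linarith
          have hpos : (0:ℝ) ≤ (L:ℝ) - l + 1 := by linarith
          have h1 : -((l:ℝ) - 1)/p * (q - p) = -((l:ℝ) - 1) * ((q - p)/p) := by
            ring
          have h2 : -(L:ℝ) * (q - p) / p = -(L:ℝ) * ((q - p)/p) := by ring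
          rw [h1, h2]
          nlinarith [mul_nonneg hpos (sub_nonneg.mpr ha')]

/-- **Error of the multi-sensitivity recovery.** Let `1 ≤ p ≤ 2 < q < ∞` (more precisely
`1 ≤ p ≤ 2` and `p < q`), `‖x‖_p ≤ 1`, `R = ⌈q/p⌉`, and suppose the random coordinate set
`K` satisfies `ℙ(j ∉ K) ≤ 2^{-(L-l+1)R}` for every level `1 ≤ l ≤ L` and every `j` with
`2^{-l/p} < |x_j|`. Let `z` keep the coordinates of `x` on `K` and be zero elsewhere.
Then `E‖x - z‖_q^q ≤ 3 · 2^{-L(q-p)/p}`. -/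
theorem stmt12 {Ω : Type*} [MeasurableSpace Ω] (μ : Measure Ω) [IsProbabilityMeasure μ]
    {m : ℕ} (p q : ℝ) (hp1 : 1 ≤ p) (hp2 : p ≤ 2) (hpq : p < q)
    (L : ℕ) (R : ℕ) (hR : R = ⌈q / p⌉₊)
    (x : Fin m → ℝ) (hx : (∑ i, |x i| ^ p) ^ (1 / p) ≤ 1)
    (K : Ω → Finset (Fin m))
    (hKmeas : ∀ j : Fin m, MeasurableSet {ω | j ∈ K ω})
    (hK : ∀ l : ℕ, 1 ≤ l → l ≤ L → ∀ j : Fin m,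
      (2 : ℝ) ^ (-(l : ℝ) / p) < |x j| →
      μ {ω | j ∉ K ω} ≤ ENNReal.ofReal ((2 : ℝ) ^ (-((L : ℝ) - l + 1) * (R : ℝ)))) :
    ∫⁻ ω, ENNReal.ofReal
        (∑ j, |x j - (if j ∈ K ω then x j else 0)| ^ q) ∂μ
      ≤ ENNReal.ofReal (3 * (2 : ℝ) ^ (-(L : ℝ) * (q - p) / p)) := by
  have hp0 : (0:ℝ) < p := by linarith
  have hq0 : (0:ℝ) < q := by linarith
  set c : ℝ := (2:ℝ) ^ (-(L:ℝ) * (q - p) / p) with hc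
  have hc0 : 0 ≤ c := Real.rpow_nonneg (by norm_num) _
  have hRq : q ≤ (R:ℝ) * p := by
    rw [hR]
    have hceil : q / p ≤ (⌈q / p⌉₊ : ℝ) := Nat.le_ceil _
    calc q = q / p * p := by field_simp
      _ ≤ (⌈q / p⌉₊ : ℝ) * p := mul_le_mul_of_nonneg_right hceil hp0.le
  have hsum_nonneg : (0:ℝ) ≤ ∑ i, |x i| ^ p :=
    Finset.sum_nonneg fun i _ => Real.rpow_nonneg (abs_nonneg _) p
  have hxp : ∑ i, |x i| ^ p ≤ 1 := by
    have h1 : ((∑ i, |x i| ^ p) ^ (1 / p)) ^ p ≤ 1 :=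
      Real.rpow_le_one (Real.rpow_nonneg hsum_nonneg _) hx hp0.le
    rwa [← Real.rpow_mul hsum_nonneg, one_div_mul_cancel hp0.ne', Real.rpow_one] at h1
  have habs1 : ∀ j, |x j| ≤ 1 := by
    intro j
    by_contra hcon
    push_neg at hcon
    have h2 : (1:ℝ) < |x j| ^ p := by
      calc (1:ℝ) = 1 ^ p := (Real.one_rpow p).symm
        _ < |x j| ^ p := Real.rpow_lt_rpow (by norm_num) hcon hp0
    have hle : |x j| ^ p ≤ ∑ i, |x i| ^ p :=
      Finset.single_le_sum (fun i _ => Real.rpow_nonneg (abs_nonneg _) p)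
        (Finset.mem_univ j)
    linarith
  have hterm : ∀ ω, ENNReal.ofReal
      (∑ j, |x j - (if j ∈ K ω then x j else 0)| ^ q)
      = ∑ j, Set.indicator {ω' | j ∉ K ω'}
          (fun _ => ENNReal.ofReal (|x j| ^ q)) ω := by
    intro ω
    rw [ENNReal.ofReal_sum_of_nonneg (fun j _ => Real.rpow_nonneg (abs_nonneg _) q)]
    refine Finset.sum_congr rfl fun j _ => ?_
    by_cases h : j ∈ K ω
    · simp [h, Set.indicator, Real.zero_rpow hq0.ne']
    · simp [h, Set.indicator]
  have hmeasc : ∀ j : Fin m, MeasurableSet {ω' | j ∉ K ω'} := by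
    intro j
    exact (hKmeas j).compl
  calc ∫⁻ ω, ENNReal.ofReal (∑ j, |x j - (if j ∈ K ω then x j else 0)| ^ q) ∂μ
      = ∫⁻ ω, ∑ j, Set.indicator {ω' | j ∉ K ω'}
          (fun _ => ENNReal.ofReal (|x j| ^ q)) ω ∂μ := lintegral_congr hterm
    _ = ∑ j, ∫⁻ ω, Set.indicator {ω' | j ∉ K ω'}
          (fun _ => ENNReal.ofReal (|x j| ^ q)) ω ∂μ :=
        lintegral_finset_sum _ fun j _ => measurable_const.indicator (hmeasc j)
    _ = ∑ j, ENNReal.ofReal (|x j| ^ q) * μ {ω' | j ∉ K ω'} := by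
        refine Finset.sum_congr rfl fun j _ => ?_
        rw [lintegral_indicator_const (hmeasc j)]
    _ ≤ ∑ j, ENNReal.ofReal (|x j| ^ p * c) := by
        refine Finset.sum_le_sum fun j _ => ?_
        exact key_pointwise p q hp1 hpq L R hRq (|x j|) (abs_nonneg _) (habs1 j)
          (μ {ω' | j ∉ K ω'}) prob_le_one
          (fun l hl1 hlL hlt => hK l hl1 hlL j hlt)
    _ = ENNReal.ofReal (∑ j, |x j| ^ p * c) :=
        (ENNReal.ofReal_sum_of_nonneg fun j _ =>
          mul_nonneg (Real.rpow_nonneg (abs_nonneg _) p) hc0).symm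
    _ ≤ ENNReal.ofReal (3 * c) := by
        apply ENNReal.ofReal_le_ofReal
        rw [← Finset.sum_mul]
        nlinarith
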